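/- Let β ∈ [0,1] and x ∈ ℝ with x ≥ 0. Then 0 ≤ log(β·(1+x)^(1−β) + (1−β)·(1+x)^(−β)) ≤ (β·(1−β)/2)·x². Moreover, if 0 < β < 1, then each of the two inequalities is an equality if and only if x = 0. -/

import Mathlib

open Real

private lemma hasDerivAt_g_aux (β t : ℝ) (h1 : (1:ℝ) + β * t ≠ 0) (h2 : (1:ℝ) + t ≠ 0) :
    HasDerivAt (fun s => Real.log (1 + β * s) - β * Real.log (1 + s))
      (β / (1 + β * t) - β / (1 + t)) t := by
  have A : HasDerivAt (fun s : ℝ => 1 + β * s) β t := by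
    simpa using ((hasDerivAt_id t).const_mul β).const_add 1
  have A' : HasDerivAt (fun s : ℝ => 1 + s) 1 t := by
    simpa using (hasDerivAt_id t).const_add 1
  have B := (Real.hasDerivAt_log h1).comp t A
  have C := (Real.hasDerivAt_log h2).comp t A'
  have := B.sub (C.const_mul β)
  exact this.congr_deriv (by ring)

private lemma g_cont (β : ℝ) (hβ0 : 0 ≤ β) :
    ContinuousOn (fun s => Real.log (1 + β * s) - β * Real.log (1 + s)) (Set.Ici (0:ℝ)) := by
  apply ContinuousOn.sub
  · apply ContinuousOn.log
    · fun_prop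
    · intro t ht
      simp only [Set.mem_Ici] at ht
      nlinarith
  · apply ContinuousOn.mul continuousOn_const
    apply ContinuousOn.log
    · fun_prop
    · intro t ht
      simp only [Set.mem_Ici] at ht
      nlinarith

private lemma g_pos (β x : ℝ) (hβ0 : 0 < β) (hβ1 : β < 1) (hx : 0 < x) :
    0 < Real.log (1 + β * x) - β * Real.log (1 + x) := by
  have hmono : StrictMonoOn (fun s => Real.log (1 + β * s) - β * Real.log (1 + s))
      (Set.Ici (0:ℝ)) := by
    apply strictMonoOn_of_deriv_pos (convex_Ici 0) (g_cont β hβ0.le)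
    intro t ht
    rw [interior_Ici] at ht
    have ht' : (0:ℝ) < t := ht
    have h1 : (0:ℝ) < 1 + β * t := by nlinarith
    have h2 : (0:ℝ) < 1 + t := by linarith
    rw [(hasDerivAt_g_aux β t h1.ne' h2.ne').deriv]
    have e : β / (1 + β * t) - β / (1 + t) = β * (1 - β) * t / ((1 + β * t) * (1 + t)) := by
      field_simp
      ring
    rw [e]
    have h3 : (0:ℝ) < 1 - β := by linarith
    exact div_pos (mul_pos (mul_pos hβ0 h3) ht') (mul_pos h1 h2)
  have h := hmono (Set.self_mem_Ici) (Set.mem_Ici.2 hx.le) hx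
  simpa using h

private lemma h_pos (β x : ℝ) (hβ0 : 0 < β) (hβ1 : β < 1) (hx : 0 < x) :
    Real.log (1 + β * x) - β * Real.log (1 + x) < β * (1 - β) / 2 * x ^ 2 := by
  have hmono : StrictMonoOn
      (fun s => β * (1 - β) / 2 * s ^ 2 - (Real.log (1 + β * s) - β * Real.log (1 + s)))
      (Set.Ici (0:ℝ)) := by
    apply strictMonoOn_of_deriv_pos (convex_Ici 0)
    · exact (ContinuousOn.mul continuousOn_const (continuousOn_pow 2)).sub (g_cont β hβ0.le)
    · intro t ht
      rw [interior_Ici] at ht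
      have ht' : (0:ℝ) < t := ht
      have h1 : (0:ℝ) < 1 + β * t := by nlinarith
      have h2 : (0:ℝ) < 1 + t := by linarith
      have P : HasDerivAt (fun s : ℝ => β * (1 - β) / 2 * s ^ 2) (β * (1 - β) / 2 * (2 * t)) t := by
        simpa using ((hasDerivAt_pow 2 t).const_mul (β * (1 - β) / 2))
      rw [(show HasDerivAt (fun s => β * (1 - β) / 2 * s ^ 2 - (Real.log (1 + β * s) - β * Real.log (1 + s))) _ t from
        P.sub (hasDerivAt_g_aux β t h1.ne' h2.ne')).deriv]
      have e : β * (1 - β) / 2 * (2 * t) - (β / (1 + β * t) - β / (1 + t)) =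
          β * (1 - β) * t * (t * (1 + β + β * t)) / ((1 + β * t) * (1 + t)) := by
        field_simp
        ring
      rw [e]
      have h3 : (0:ℝ) < 1 - β := by linarith
      have h4 : (0:ℝ) < 1 + β + β * t := by nlinarith
      exact div_pos (mul_pos (mul_pos (mul_pos hβ0 h3) ht') (mul_pos ht' h4)) (mul_pos h1 h2)
  have h := hmono (Set.self_mem_Ici) (Set.mem_Ici.2 hx.le) hx
  simp only [mul_zero, add_zero, Real.log_one, ne_eq, OfNat.ofNat_ne_zero,
    not_false_eq_true, zero_pow, sub_zero, sub_self] at h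
  linarith

theorem log_sum_rpow_bound_nonneg (β x : ℝ) (hβ0 : 0 ≤ β) (hβ1 : β ≤ 1) (hx : 0 ≤ x) :
    0 ≤ Real.log (β * (1 + x) ^ (1 - β) + (1 - β) * (1 + x) ^ (-β)) ∧
    Real.log (β * (1 + x) ^ (1 - β) + (1 - β) * (1 + x) ^ (-β)) ≤
      β * (1 - β) / 2 * x ^ 2 ∧
    (0 < β → β < 1 →
      (Real.log (β * (1 + x) ^ (1 - β) + (1 - β) * (1 + x) ^ (-β)) = 0 ↔ x = 0) ∧
      (Real.log (β * (1 + x) ^ (1 - β) + (1 - β) * (1 + x) ^ (-β)) =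
          β * (1 - β) / 2 * x ^ 2 ↔ x = 0)) := by
  have h1 : (0:ℝ) < 1 + x := by linarith
  have hbx : (0:ℝ) < 1 + β * x := by nlinarith
  have key : Real.log (β * (1 + x) ^ (1 - β) + (1 - β) * (1 + x) ^ (-β)) =
      Real.log (1 + β * x) - β * Real.log (1 + x) := by
    have e1 : (1 + x) ^ (1 - β) = (1 + x) * (1 + x) ^ (-β) := by
      rw [show (1 - β) = 1 + (-β) by ring, Real.rpow_add h1, Real.rpow_one]
    rw [e1]
    have e2 : β * ((1 + x) * (1 + x) ^ (-β)) + (1 - β) * (1 + x) ^ (-β) =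
        (1 + x) ^ (-β) * (1 + β * x) := by ring
    rw [e2, Real.log_mul (by positivity) hbx.ne', Real.log_rpow h1]
    ring
  rw [key]
  rcases eq_or_lt_of_le hx with hx0 | hx0
  · refine ⟨by simp [← hx0], by simp [← hx0], fun _ _ => ⟨by simp [← hx0], by simp [← hx0]⟩⟩
  · constructor
    · rcases eq_or_lt_of_le hβ0 with hb | hb
      · simp [← hb]
      · rcases eq_or_lt_of_le hβ1 with hb1 | hb1
        · simp [hb1]
        · exact (g_pos β x hb hb1 hx0).le
    constructor
    · rcases eq_or_lt_of_le hβ0 with hb | hb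
      · simp [← hb]
      · rcases eq_or_lt_of_le hβ1 with hb1 | hb1
        · simp [hb1]
        · exact (h_pos β x hb hb1 hx0).le
    · intro hb hb1
      constructor
      · constructor
        · intro h; exact absurd h (g_pos β x hb hb1 hx0).ne'
        · intro h; exact absurd h hx0.ne'
      · constructor
        · intro h; exact absurd h (h_pos β x hb hb1 hx0).ne
        · intro h; exact absurd h hx0.ne'
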